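/- Let C be a semidualizing R-module over a Noetherian ring R and p a prime ideal. An R_p-module M is C_p-injective if and only if M is isomorphic to the localization at p of some C-injective R-module. -/

import Mathlib

open CategoryTheory

universe u

variable (R : Type u) [CommRing R]

/-- `M` has the `t(p)`-property. -/
def HasTProperty (p : Ideal R) (M : Type u) [AddCommGroup M] [Module R M] : Prop :=
  (∀ r : R, r ∉ p → Function.Bijective (fun x : M => r • x)) ∧
    ∀ x : M, ∃ m : ℕ, 1 ≤ m ∧ ∀ a ∈ p ^ m, a • x = 0

/-- `E` is an injective envelope of `M`. -/
def IsInjectiveEnvelope (M E : Type u) [AddCommGroup M] [Module R M]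
    [AddCommGroup E] [Module R E] : Prop :=
  Module.Injective R E ∧ ∃ f : M →ₗ[R] E, Function.Injective f ∧
    ∀ N : Submodule R E, N ≠ ⊥ → N ⊓ LinearMap.range f ≠ ⊥

/-- `C` is a semidualizing `R`-module. -/
def IsSemidualizing (C : Type u) [AddCommGroup C] [Module R C] : Prop :=
  Module.Finite R C ∧ Function.Bijective (LinearMap.lsmul R C) ∧
    ∀ i : ℕ, 0 < i → Subsingleton
      (((Ext R (ModuleCat.{u} R) i).obj
        (Opposite.op (ModuleCat.of R C))).obj (ModuleCat.of R C))

/-- `C` has finite injective dimension over `R`. -/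
def HasFiniteInjectiveDimension (C : Type u) [AddCommGroup C] [Module R C] : Prop :=
  ∃ n : ℕ, ∀ (N : ModuleCat.{u} R) (i : ℕ), n < i →
    Subsingleton (((Ext R (ModuleCat.{u} R) i).obj (Opposite.op N)).obj (ModuleCat.of R C))

/-- `C` is a dualizing `R`-module. -/
def IsDualizing (C : Type u) [AddCommGroup C] [Module R C] : Prop :=
  IsSemidualizing R C ∧ HasFiniteInjectiveDimension R C

/-- `M` is `C`-injective. -/
def IsCInjective (C : Type u) [AddCommGroup C] [Module R C]
    (M : Type u) [AddCommGroup M] [Module R M] : Prop :=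
  ∃ (I : Type u) (_ : AddCommGroup I) (_ : Module R I),
    Module.Injective R I ∧ Nonempty (M ≃ₗ[R] (C →ₗ[R] I))

/-- `Tor_i^R(M,N)` as a module category object. -/
noncomputable def TorMod (i : ℕ) (M N : Type u) [AddCommGroup M] [Module R M]
    [AddCommGroup N] [Module R N] : ModuleCat.{u} R :=
  ((Tor (ModuleCat.{u} R) i).obj (ModuleCat.of R M)).obj (ModuleCat.of R N)

/-- The Krull dimension of a module, as dimension of `R ⧸ Ann M`. -/
noncomputable def moduleKrullDim (M : Type u) [AddCommGroup M] [Module R M] :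
    WithBot (WithTop ℕ) :=
  ringKrullDim (R ⧸ Module.annihilator R M)


/-- For `s ∈ S` and `Q` a module over a localization at `S`, action of `s` on `Q` is a unit. -/
lemma aux_map_units (S : Submonoid R) (A : Type u) [CommRing A] [Algebra R A]
    [IsLocalization S A] (Q : Type u) [AddCommGroup Q] [Module R Q] [Module A Q]
    [IsScalarTower R A Q] (s : S) :
    IsUnit (algebraMap R (Module.End R Q) s) := by
  rw [Module.End.isUnit_iff]
  have hu : IsUnit (algebraMap R A s) := IsLocalization.map_units A s
  have key : ∀ x : Q, (algebraMap R (Module.End R Q) s) x = (algebraMap R A s) • x := by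
    intro x
    rw [Module.algebraMap_end_apply, algebraMap_smul]
  constructor
  · intro x y h
    rw [key, key] at h
    have := congrArg (fun z => ((hu.unit⁻¹ : Aˣ) : A) • z) h
    simp only [smul_smul, IsUnit.val_inv_mul, one_smul] at this
    exact this
  · intro y
    refine ⟨((hu.unit⁻¹ : Aˣ) : A) • y, ?_⟩
    rw [key, smul_smul, IsUnit.mul_val_inv, one_smul]


/-- Lemma B: an `R`-injective module over the localization is injective over the localization. -/
lemma aux_injB (S : Submonoid R) (A : Type u) [CommRing A] [Algebra R A]
    [IsLocalization S A] (Q : Type u) [AddCommGroup Q] [Module R Q] [Module A Q]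
    [IsScalarTower R A Q] (hQ : Module.Injective R Q) :
    Module.Injective A Q := by
  apply Module.Baer.injective
  intro a f
  have hB : Module.Baer R Q := Module.Baer.of_injective hQ
  set b : Ideal R := a.comap (algebraMap R A) with hb
  let j : b →ₗ[R] a :=
    { toFun := fun x => ⟨algebraMap R A x.1, x.2⟩
      map_add' := by intro x y; exact Subtype.ext (by simp)
      map_smul' := by
        intro r x
        refine Subtype.ext ?_
        simp [Algebra.smul_def] }
  let g : b →ₗ[R] Q := (f.restrictScalars R) ∘ₗ j
  obtain ⟨G, hG⟩ := hB b g
  have hu : ∀ s : S, IsUnit (algebraMap R (Module.End R Q) s) := aux_map_units R S A Q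
  let F₀ : A →ₗ[R] Q := IsLocalizedModule.lift S (Algebra.linearMap R A) G hu
  refine ⟨F₀.extendScalarsOfIsLocalization S A, fun y hy => ?_⟩
  obtain ⟨⟨x, s⟩, hxs⟩ := IsLocalization.surj (M := S) y
  have hxb : x ∈ b := by
    rw [hb, Ideal.mem_comap, ← hxs]
    exact a.mul_mem_right _ hy
  have hinj := ((Module.End.isUnit_iff _).mp (hu s)).injective
  apply hinj
  show (algebraMap R (Module.End R Q) s) _ = (algebraMap R (Module.End R Q) s) _
  rw [Module.algebraMap_end_apply, Module.algebraMap_end_apply, ← algebraMap_smul A (s : R),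
    ← algebraMap_smul A (s : R) (f ⟨y, hy⟩), ← map_smul (F₀.extendScalarsOfIsLocalization S A),
    ← map_smul f]
  have h1 : (algebraMap R A s) • y = algebraMap R A x := by
    rw [smul_eq_mul, mul_comm, hxs]
  have h2 : (algebraMap R A s) • (⟨y, hy⟩ : a) = ⟨algebraMap R A x, by
      rw [← hxs]; exact a.mul_mem_right _ hy⟩ := Subtype.ext h1
  rw [h1, h2]
  show F₀ (Algebra.linearMap R A x) = _
  rw [IsLocalizedModule.lift_apply, hG x hxb]
  rfl


/-- Lemma C: a module injective over a localization of `R` is injective over `R`. -/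
lemma aux_injC (S : Submonoid R) (A : Type u) [CommRing A] [Algebra R A]
    [IsLocalization S A] (Q : Type u) [AddCommGroup Q] [Module R Q] [Module A Q]
    [IsScalarTower R A Q] (hQ : Module.Injective A Q) :
    Module.Injective R Q := by
  apply Module.Baer.injective
  intro b f
  have hu : ∀ s : S, IsUnit (algebraMap R (Module.End R Q) s) := aux_map_units R S A Q
  let b' : Submodule A A := (b : Submodule R R).localized' A S (Algebra.linearMap R A)
  let ι : b →ₗ[R] b' := (b : Submodule R R).toLocalized' A S (Algebra.linearMap R A)
  let f' : b' →ₗ[R] Q := IsLocalizedModule.lift S ι f hu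
  have hB : Module.Baer A Q := Module.Baer.of_injective hQ
  obtain ⟨G, hG⟩ := hB b' (f'.extendScalarsOfIsLocalization S A)
  refine ⟨(G.restrictScalars R) ∘ₗ (Algebra.linearMap R A), fun x hx => ?_⟩
  have hmem : algebraMap R A x ∈ b' :=
    ⟨x, hx, 1, IsLocalizedModule.mk'_one _ _ _⟩
  have h1 : ι ⟨x, hx⟩ = ⟨algebraMap R A x, hmem⟩ := rfl
  calc ((G.restrictScalars R) ∘ₗ (Algebra.linearMap R A)) x
      = G (algebraMap R A x) := rfl
    _ = (f'.extendScalarsOfIsLocalization S A) ⟨algebraMap R A x, hmem⟩ := hG _ hmem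
    _ = f' (ι ⟨x, hx⟩) := by rw [h1]; rfl
    _ = f ⟨x, hx⟩ := IsLocalizedModule.lift_apply S ι f hu _

/-- Lemma A: localization of an injective module over a Noetherian ring is injective over `R`. -/
lemma aux_injA [IsNoetherianRing R] (S : Submonoid R) (I : Type u) [AddCommGroup I]
    [Module R I] (hI : Module.Injective R I) :
    Module.Injective R (LocalizedModule S I) := by
  apply Module.Baer.injective
  intro b f
  have hu : ∀ s : S, IsUnit (algebraMap R (Module.End R (LocalizedModule S I)) s) :=
    IsLocalizedModule.map_units (LocalizedModule.mkLinearMap S I)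
  haveI : Module.Finite R b := Module.Finite.iff_fg.mpr (IsNoetherian.noetherian _)
  haveI : Module.FinitePresentation R b := Module.finitePresentation_of_finite _ _
  -- lift f to the localized ideal
  let f' : LocalizedModule S b →ₗ[R] LocalizedModule S I := LocalizedModule.lift S f hu
  let f'' := f'.extendScalarsOfIsLocalization S (Localization S)
  -- the Hom-module localizes
  obtain ⟨⟨g, s⟩, hgs⟩ := IsLocalizedModule.surj S
    (IsLocalizedModule.mapExtendScalars S (LocalizedModule.mkLinearMap S b)
      (LocalizedModule.mkLinearMap S I) (Localization S)) f''
  have hB : Module.Baer R I := Module.Baer.of_injective hI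
  obtain ⟨G, hG⟩ := hB b g
  refine ⟨(((hu s).unit⁻¹ : (Module.End R (LocalizedModule S I))ˣ) : Module.End R (LocalizedModule S I)) ∘ₗ
    (LocalizedModule.mkLinearMap S I) ∘ₗ G, fun x hx => ?_⟩
  have hinj := ((Module.End.isUnit_iff _).mp (hu s)).injective
  apply hinj
  show (algebraMap R (Module.End R (LocalizedModule S I)) s) _
      = (algebraMap R (Module.End R (LocalizedModule S I)) s) _
  have e1 : (algebraMap R (Module.End R (LocalizedModule S I)) s)
      ((((hu s).unit⁻¹ : (Module.End R (LocalizedModule S I))ˣ) : Module.End R (LocalizedModule S I))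
        ((LocalizedModule.mkLinearMap S I) (G x))) =
      (LocalizedModule.mkLinearMap S I) (G x) :=
    Module.End.isUnit_apply_inv_apply_of_isUnit (hu s) _
  rw [LinearMap.comp_apply, LinearMap.comp_apply, e1]
  have hfx := LinearMap.congr_fun hgs ((LocalizedModule.mkLinearMap S b) ⟨x, hx⟩)
  simp only [LinearMap.smul_apply, IsLocalizedModule.mapExtendScalars_apply_apply,
    IsLocalizedModule.map_apply] at hfx
  -- hfx : s • f'' (mk ⟨x,hx⟩ 1) = mk (g ⟨x,hx⟩) 1  (roughly)
  have e2 : f'' ((LocalizedModule.mkLinearMap S b) ⟨x, hx⟩) = f ⟨x, hx⟩ := by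
    show f' _ = _
    exact LinearMap.congr_fun (LocalizedModule.lift_comp S f hu) ⟨x, hx⟩
  rw [e2] at hfx
  rw [Module.algebraMap_end_apply, hG x hx, ← hfx, Submonoid.smul_def]

/-- An `R`-linear equivalence between modules over a localization is linear over it. -/
noncomputable def auxExtendEquiv (S : Submonoid R) (A : Type u) [CommRing A] [Algebra R A]
    [IsLocalization S A] {M N : Type u} [AddCommGroup M] [AddCommGroup N]
    [Module R M] [Module R N] [Module A M] [Module A N] [IsScalarTower R A M]
    [IsScalarTower R A N] (e : M ≃ₗ[R] N) : M ≃ₗ[A] N :=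
  LinearEquiv.ofLinear (e.toLinearMap.extendScalarsOfIsLocalization S A)
    (e.symm.toLinearMap.extendScalarsOfIsLocalization S A)
    (by ext x; simp) (by ext x; simp)

theorem stmt17 [IsNoetherianRing R] (C : Type u) [AddCommGroup C] [Module R C]
    (hC : IsSemidualizing R C) (p : Ideal R) [p.IsPrime]
    (M : Type u) [AddCommGroup M] [Module (Localization p.primeCompl) M] :
    IsCInjective (Localization p.primeCompl) (LocalizedModule p.primeCompl C) M ↔
      ∃ (N : Type u) (_ : AddCommGroup N) (_ : Module R N),
        IsCInjective R C N ∧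
        Nonempty (M ≃ₗ[Localization p.primeCompl] LocalizedModule p.primeCompl N) := by
  classical
  set S := p.primeCompl
  constructor
  · rintro ⟨J, _, _, hJ, ⟨eM⟩⟩
    letI : Module R J := Module.compHom J (algebraMap R (Localization S))
    haveI : IsScalarTower R (Localization S) J :=
      IsScalarTower.of_algebraMap_smul fun r x => rfl
    haveI hJR : Module.Injective R J := aux_injC R S (Localization S) J hJ
    haveI := hC.1
    haveI : Module.FinitePresentation R C := Module.finitePresentation_of_finite _ _
    haveI : IsLocalizedModule S (LinearMap.id : J →ₗ[R] J) :=
      isLocalizedModule_id S J (Localization S)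
    let φ := IsLocalizedModule.mapExtendScalars S (LocalizedModule.mkLinearMap S C)
      (LinearMap.id : J →ₗ[R] J) (Localization S)
    let iso := IsLocalizedModule.iso S φ
    refine ⟨C →ₗ[R] J, inferInstance, inferInstance,
      ⟨J, inferInstance, inferInstance, hJR, ⟨LinearEquiv.refl _ _⟩⟩, ⟨?_⟩⟩
    exact eM.trans (auxExtendEquiv R S (Localization S) iso).symm
  · rintro ⟨N, _, _, ⟨I, _, _, hI, ⟨eN⟩⟩, ⟨eM⟩⟩
    haveI := hC.1
    haveI : Module.FinitePresentation R C := Module.finitePresentation_of_finite _ _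
    have hA : Module.Injective R (LocalizedModule S I) := aux_injA R S I hI
    have hinj : Module.Injective (Localization S) (LocalizedModule S I) :=
      aux_injB R S (Localization S) _ hA
    let ψ := IsLocalizedModule.mapExtendScalars S (LocalizedModule.mkLinearMap S C)
      (LocalizedModule.mkLinearMap S I) (Localization S)
    let iso1 := IsLocalizedModule.iso S ψ
    let iso2 := IsLocalizedModule.iso S
      ((LocalizedModule.mkLinearMap S (C →ₗ[R] I)) ∘ₗ eN.toLinearMap)
    exact ⟨LocalizedModule S I, inferInstance, inferInstance, hinj,
      ⟨eM.trans ((auxExtendEquiv R S (Localization S) iso2).trans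
        (auxExtendEquiv R S (Localization S) iso1))⟩⟩
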